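/- Let U be the union of those connected components of A ∪ B (in the Dynkin graph on Π) that do not meet A, and set B′ = B \ U. Then the (A,B)-roots coincide with the (A,B′)-roots, a root is a significant (A,B)-root if and only if it is a significant (A,B′)-root, and consequently ℓ(A,B) = ℓ(A,B′). -/

import Mathlib

open scoped RealInnerProductSpace
open scoped Classical

/-- A reduced crystallographic root system `roots` spanning a real inner product
space `V`, with a chosen set `pos` of positive roots, the corresponding base
`simple` of simple roots, and the coefficient function `coeff`, where
`coeff ξ α = c_α(ξ)` is the coefficient of the simple root `α` in the unique
expression `ξ = ∑_{α ∈ simple} c_α(ξ) • α`. -/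
structure RootSystemData (V : Type*) [NormedAddCommGroup V] [InnerProductSpace ℝ V] where
  roots : Finset V
  pos : Finset V
  simple : Finset V
  coeff : V → V → ℝ
  pos_subset : pos ⊆ roots
  simple_subset : simple ⊆ pos
  root_ne_zero : ∀ δ ∈ roots, δ ≠ (0 : V)
  neg_mem : ∀ δ ∈ roots, -δ ∈ roots
  pos_or_neg : ∀ δ ∈ roots, δ ∈ pos ∨ -δ ∈ pos
  pos_neg_not : ∀ δ ∈ pos, -δ ∉ pos
  reduced : ∀ δ ∈ roots, ∀ t : ℝ, t • δ ∈ roots → t = 1 ∨ t = -1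
  crystallographic : ∀ δ ∈ roots, ∀ ε ∈ roots, ∃ n : ℤ, 2 * ⟪δ, ε⟫ / ⟪ε, ε⟫ = (n : ℝ)
  reflect_mem : ∀ δ ∈ roots, ∀ ε ∈ roots, δ - (2 * ⟪δ, ε⟫ / ⟪ε, ε⟫) • ε ∈ roots
  span_eq_top : Submodule.span ℝ (simple : Set V) = ⊤
  linearIndependent : LinearIndependent ℝ (fun α : simple => (α : V))
  coeff_spec : ∀ ξ : V, ξ = ∑ α ∈ simple, coeff ξ α • α
  pos_coeff_nonneg : ∀ δ ∈ pos, ∀ α ∈ simple, 0 ≤ coeff δ α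

namespace RootSystemData

variable {V : Type*} [NormedAddCommGroup V] [InnerProductSpace ℝ V]

/-- The support `C(ξ)` of `ξ`: the set of simple roots with nonzero coefficient in `ξ`. -/
noncomputable def support (R : RootSystemData V) (ξ : V) : Finset V :=
  R.simple.filter fun α => R.coeff ξ α ≠ 0

/-- The coefficientwise partial order: `x ≤ y` iff `c_α(x) ≤ c_α(y)` for all simple `α`. -/
def cle (R : RootSystemData V) (x y : V) : Prop :=
  ∀ α ∈ R.simple, R.coeff x α ≤ R.coeff y α

/-- An `(A,B)`-root: a positive root whose support lies in `A ∪ B` and which has a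
strictly positive coefficient at some element of `A`. -/
def IsABRoot (R : RootSystemData V) (A B : Finset V) (δ : V) : Prop :=
  δ ∈ R.pos ∧ R.support δ ⊆ A ∪ B ∧ ∃ α₀ ∈ A, 0 < R.coeff δ α₀

/-- A significant `(A,B)`-root. -/
def IsSignificant (R : RootSystemData V) (A B : Finset V) (δ : V) : Prop :=
  R.IsABRoot A B δ ∧ ∃ σ : V, R.IsABRoot A B σ ∧ R.cle σ δ ∧
    (∑ β ∈ B, R.coeff σ β * ⟪β, β⟫) ≤ (∑ α ∈ A, R.coeff σ α * ⟪α, α⟫) ∧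
    (∀ x ∈ R.support (δ - σ), ∀ y ∈ R.support (δ - σ), ‖x‖ = ‖y‖) ∧
    (∀ x ∈ R.support (δ - σ), ‖x‖ ≤ ‖σ‖)

/-- `ℓ(A,B)`, the number of significant `(A,B)`-roots. -/
noncomputable def ell (R : RootSystemData V) (A B : Finset V) : ℕ :=
  (R.pos.filter fun δ => R.IsSignificant A B δ).card

/-- `γ`, the half-sum of the positive roots. -/
noncomputable def gamma (R : RootSystemData V) : V :=
  (2 : ℝ)⁻¹ • ∑ δ ∈ R.pos, δ

/-- A weight: `2(β,α)/(α,α) ∈ ℤ` for all roots `α`. -/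
def IsWeight (R : RootSystemData V) (β : V) : Prop :=
  ∀ δ ∈ R.roots, ∃ n : ℤ, 2 * ⟪β, δ⟫ / ⟪δ, δ⟫ = (n : ℝ)

/-- A regular weight: not orthogonal to any positive root. -/
def IsRegular (R : RootSystemData V) (lam : V) : Prop :=
  ∀ δ ∈ R.pos, ⟪lam, δ⟫ ≠ 0

end RootSystemData


/-- `x` and `y` are connected within `S ⊆ Π` in the Dynkin graph (edges between simple
roots with nonzero inner product). -/
def RootSystemData.connTo {V : Type*} [NormedAddCommGroup V] [InnerProductSpace ℝ V]
    (R : RootSystemData V) (S : Finset V) (x y : V) : Prop :=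
  ∃ (k : ℕ) (p : ℕ → V), p 0 = x ∧ p k = y ∧ (∀ i ≤ k, p i ∈ S) ∧
    ∀ i < k, ⟪p i, p (i + 1)⟫ ≠ 0
namespace RootSystemData

variable {V : Type*} [NormedAddCommGroup V] [InnerProductSpace ℝ V]

lemma sum_simple_eq_zero (R : RootSystemData V) (c : V → ℝ)
    (h : ∑ α ∈ R.simple, c α • α = 0) : ∀ α ∈ R.simple, c α = 0 := by
  intro α hα
  have h2 : ∑ β : R.simple, c (β : V) • (β : V) = 0 := by
    rw [Finset.sum_coe_sort R.simple (fun β => c β • β)]; exact h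
  exact linearIndependent_iff'.mp R.linearIndependent Finset.univ
    (fun b => c (b : V)) h2 ⟨α, hα⟩ (Finset.mem_univ _)

lemma coeff_eq_of_sum (R : RootSystemData V) (ξ : V) (c : V → ℝ)
    (h : ξ = ∑ α ∈ R.simple, c α • α) :
    ∀ α ∈ R.simple, R.coeff ξ α = c α := by
  intro α hα
  have hsum : ∑ β ∈ R.simple, (R.coeff ξ β - c β) • β = 0 := by
    simp only [sub_smul, Finset.sum_sub_distrib]
    rw [← R.coeff_spec ξ, ← h, sub_self]
  have := R.sum_simple_eq_zero _ hsum α hα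
  linarith

lemma coeff_neg (R : RootSystemData V) (ξ : V) (α : V) (hα : α ∈ R.simple) :
    R.coeff (-ξ) α = - R.coeff ξ α := by
  refine R.coeff_eq_of_sum (-ξ) (fun β => - R.coeff ξ β) ?_ α hα
  conv_lhs => rw [R.coeff_spec ξ]
  simp only [neg_smul]
  exact (Finset.sum_neg_distrib _).symm

lemma mem_pos_of_coeff_pos (R : RootSystemData V) {δ : V} (hδ : δ ∈ R.roots)
    {α : V} (hα : α ∈ R.simple) (h : 0 < R.coeff δ α) : δ ∈ R.pos := by
  rcases R.pos_or_neg δ hδ with h1 | h1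
  · exact h1
  · have h2 := R.pos_coeff_nonneg _ h1 α hα
    rw [R.coeff_neg δ α hα] at h2
    linarith

lemma coeff_sub_smul (R : RootSystemData V) (τ : V) {α : V} (hα : α ∈ R.simple) (k : ℝ) :
    ∀ β ∈ R.simple, R.coeff (τ - k • α) β = R.coeff τ β - (if β = α then k else 0) := by
  apply R.coeff_eq_of_sum
  simp only [sub_smul, ite_smul, zero_smul, Finset.sum_sub_distrib]
  rw [← R.coeff_spec τ, Finset.sum_ite_eq' R.simple α (fun x => k • x), if_pos hα]

lemma coeff_eq_zero_of_not_mem_support (R : RootSystemData V) {ξ α : V}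
    (hα : α ∈ R.simple) (h : α ∉ R.support ξ) : R.coeff ξ α = 0 := by
  by_contra hc
  exact h (Finset.mem_filter.mpr ⟨hα, hc⟩)

lemma inner_self_pos' {x : V} (h : x ≠ 0) : (0:ℝ) < ⟪x, x⟫ :=
  lt_of_le_of_ne real_inner_self_nonneg
    (fun hc => h (real_inner_self_nonpos.mp (le_of_eq hc.symm)))

lemma mem_support (R : RootSystemData V) {ξ α : V} :
    α ∈ R.support ξ ↔ α ∈ R.simple ∧ R.coeff ξ α ≠ 0 := Finset.mem_filter

lemma restrict_sum (R : RootSystemData V) {S : Finset V} (hS : S ⊆ R.simple) (c : V → ℝ) :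
    ∑ β ∈ R.simple, (if β ∈ S then c β else 0) • β = ∑ β ∈ S, c β • β := by
  simp only [ite_smul, zero_smul]
  rw [Finset.sum_ite_mem, Finset.inter_eq_right.mpr hS]

/-- Key lemma: the support of a positive root cannot split into two
mutually orthogonal nonempty pieces. -/
lemma no_split (R : RootSystemData V) (S1 S2 : Finset V)
    (h1 : S1 ⊆ R.simple) (h2 : S2 ⊆ R.simple)
    (horth : ∀ x ∈ S1, ∀ y ∈ S2, ⟪x, y⟫ = 0) :
    ¬ ∃ τ ∈ R.pos, R.support τ ⊆ S1 ∪ S2 ∧ (R.support τ ∩ S1).Nonempty ∧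
      (R.support τ ∩ S2).Nonempty := by
  rintro ⟨τ₀, hτ₀, hsub₀, hn1₀, hn2₀⟩
  set T : Finset V := R.pos.filter (fun τ => R.support τ ⊆ S1 ∪ S2 ∧
      (R.support τ ∩ S1).Nonempty ∧ (R.support τ ∩ S2).Nonempty) with hT
  have hTne : T.Nonempty := ⟨τ₀, Finset.mem_filter.mpr ⟨hτ₀, hsub₀, hn1₀, hn2₀⟩⟩
  obtain ⟨τ, hτT, hmin⟩ := Finset.exists_min_image T (fun τ => ∑ α ∈ S1, R.coeff τ α) hTne
  obtain ⟨hτpos, hsub, ⟨a1, ha1⟩, ⟨a2, ha2⟩⟩ := Finset.mem_filter.mp hτT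
  rw [Finset.mem_inter] at ha1 ha2
  have hτroot : τ ∈ R.roots := R.pos_subset hτpos
  -- the S1-part of τ
  set τ1 : V := ∑ α ∈ S1, R.coeff τ α • α with hτ1
  have hτ1ne : τ1 ≠ 0 := by
    intro h0
    exact (R.mem_support.mp ha1.1).2 (by
      have : ∀ α ∈ R.simple, (if α ∈ S1 then R.coeff τ α else 0) = 0 := by
        apply R.sum_simple_eq_zero
        rw [R.restrict_sum h1 (R.coeff τ)]
        exact h0
      have := this a1 (h1 ha1.2)
      rwa [if_pos ha1.2] at this)
  -- τ - τ1 is orthogonal to everything in S1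
  have hperp : ∀ α ∈ S1, ⟪τ - τ1, α⟫ = 0 := by
    intro α hαS1
    have hτeq : τ - τ1 = ∑ β ∈ R.simple, (if β ∈ S1 then 0 else R.coeff τ β) • β := by
      have : τ1 = ∑ β ∈ R.simple, (if β ∈ S1 then R.coeff τ β else 0) • β :=
        (R.restrict_sum h1 (R.coeff τ)).symm
      rw [this]
      nth_rewrite 1 [R.coeff_spec τ]
      rw [← Finset.sum_sub_distrib]
      apply Finset.sum_congr rfl
      intro β _
      by_cases hβ : β ∈ S1 <;> simp [hβ, sub_smul]
    rw [hτeq, sum_inner]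
    apply Finset.sum_eq_zero
    intro β hβ
    by_cases hβ1 : β ∈ S1
    · simp [hβ1]
    · rw [if_neg hβ1, real_inner_smul_left]
      by_cases hβ2 : β ∈ S2
      · rw [real_inner_comm, horth α hαS1 β hβ2, mul_zero]
      · have : β ∉ R.support τ := fun hc => by
          rcases Finset.mem_union.mp (hsub hc) with h | h
          exacts [hβ1 h, hβ2 h]
        rw [R.coeff_eq_zero_of_not_mem_support hβ this, zero_mul]
  -- hence ⟪τ, τ1⟫ = ‖τ1‖² > 0, so some α ∈ S1 has c_α > 0 and ⟪τ,α⟫ > 0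
  have hpos_sum : 0 < ∑ α ∈ S1, R.coeff τ α * ⟪τ, α⟫ := by
    have e1 : ∑ α ∈ S1, R.coeff τ α * ⟪τ, α⟫ = ⟪τ, τ1⟫ := by
      rw [hτ1, inner_sum]
      apply Finset.sum_congr rfl
      intro α _
      rw [real_inner_smul_right]
    have e2 : ⟪τ, τ1⟫ = ⟪τ1, τ1⟫ := by
      have := hperp
      have : ⟪τ - τ1, τ1⟫ = 0 := by
        rw [hτ1, inner_sum]
        apply Finset.sum_eq_zero
        intro α hαS1
        rw [real_inner_smul_right, hperp α hαS1, mul_zero]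
      have h' : ⟪τ, τ1⟫ - ⟪τ1, τ1⟫ = 0 := by rw [← inner_sub_left]; exact this
      linarith
    rw [e1, e2]
    exact RootSystemData.inner_self_pos' hτ1ne
  obtain ⟨α, hαS1, hα⟩ : ∃ α ∈ S1, 0 < R.coeff τ α * ⟪τ, α⟫ := by
    by_contra hc
    push_neg at hc
    have : ∑ α ∈ S1, R.coeff τ α * ⟪τ, α⟫ ≤ 0 := Finset.sum_nonpos hc
    linarith
  have hαsimple : α ∈ R.simple := h1 hαS1
  have hαroot : α ∈ R.roots := R.pos_subset (R.simple_subset hαsimple)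
  have hαα : (0:ℝ) < ⟪α, α⟫ := RootSystemData.inner_self_pos' (R.root_ne_zero α hαroot)
  have hcα : 0 ≤ R.coeff τ α := R.pos_coeff_nonneg τ hτpos α hαsimple
  have hτα : 0 < ⟪τ, α⟫ := by nlinarith
  set k : ℝ := 2 * ⟪τ, α⟫ / ⟪α, α⟫ with hk
  have hkpos : 0 < k := div_pos (by linarith) hαα
  set τ' : V := τ - k • α with hτ'
  have hτ'root : τ' ∈ R.roots := R.reflect_mem τ hτroot α hαroot
  have hcoeff' : ∀ β ∈ R.simple, R.coeff τ' β = R.coeff τ β - (if β = α then k else 0) :=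
    R.coeff_sub_smul τ hαsimple k
  have ha2ne : a2 ≠ α := by
    intro h
    have h0 := horth α hαS1 a2 ha2.2
    rw [h] at h0
    linarith
  have ha2simple : a2 ∈ R.simple := h2 ha2.2
  have hca2 : 0 < R.coeff τ' a2 := by
    rw [hcoeff' a2 ha2simple, if_neg ha2ne, sub_zero]
    have h0 := (R.mem_support.mp ha2.1).2
    have := R.pos_coeff_nonneg τ hτpos a2 ha2simple
    exact lt_of_le_of_ne this (Ne.symm h0)
  have hτ'pos : τ' ∈ R.pos := R.mem_pos_of_coeff_pos hτ'root ha2simple hca2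
  have hsub' : R.support τ' ⊆ S1 ∪ S2 := by
    intro β hβ
    obtain ⟨hβs, hβc⟩ := R.mem_support.mp hβ
    rw [hcoeff' β hβs] at hβc
    by_cases hβα : β = α
    · rw [hβα]; exact Finset.mem_union_left _ hαS1
    · rw [if_neg hβα, sub_zero] at hβc
      exact hsub (R.mem_support.mpr ⟨hβs, hβc⟩)
  have ha2' : a2 ∈ R.support τ' ∩ S2 :=
    Finset.mem_inter.mpr ⟨R.mem_support.mpr ⟨ha2simple, ne_of_gt hca2⟩, ha2.2⟩
  by_cases hcase : (R.support τ' ∩ S1).Nonempty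
  · -- τ' ∈ T with strictly smaller S1-sum: contradiction with minimality
    have hτ'T : τ' ∈ T := Finset.mem_filter.mpr ⟨hτ'pos, hsub', hcase, ⟨a2, ha2'⟩⟩
    have hle := hmin τ' hτ'T
    have hsum' : ∑ β ∈ S1, R.coeff τ' β = (∑ β ∈ S1, R.coeff τ β) - k := by
      rw [Finset.sum_congr rfl (fun β hβ => hcoeff' β (h1 hβ)), Finset.sum_sub_distrib,
        Finset.sum_ite_eq' S1 α (fun _ => k), if_pos hαS1]
    rw [hsum'] at hle
    linarith
  · -- support τ' misses S1 entirely; deduce ⟪τ,α⟫ = k⟪α,α⟫, so k = 2k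
    have hzero : ∀ β ∈ S1, R.coeff τ' β = 0 := by
      intro β hβ
      apply R.coeff_eq_zero_of_not_mem_support (h1 hβ)
      intro hc
      exact hcase ⟨β, Finset.mem_inter.mpr ⟨hc, hβ⟩⟩
    have hkα : R.coeff τ α = k := by
      have := hzero α hαS1
      rw [hcoeff' α hαsimple, if_pos rfl] at this
      linarith
    have hinner : ⟪τ, α⟫ = k * ⟪α, α⟫ := by
      nth_rewrite 1 [R.coeff_spec τ]
      rw [sum_inner]
      rw [Finset.sum_eq_single α]
      · rw [real_inner_smul_left, hkα]
      · intro β hβ hβα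
        rw [real_inner_smul_left]
        by_cases hβ1 : β ∈ S1
        · have := hzero β hβ1
          rw [hcoeff' β hβ, if_neg hβα, sub_zero] at this
          rw [this, zero_mul]
        · by_cases hβ2 : β ∈ S2
          · rw [real_inner_comm, horth α hαS1 β hβ2, mul_zero]
          · have : β ∉ R.support τ := fun hc => by
              rcases Finset.mem_union.mp (hsub hc) with h | h
              exacts [hβ1 h, hβ2 h]
            rw [R.coeff_eq_zero_of_not_mem_support hβ this, zero_mul]
      · intro h; exact absurd hαsimple h
    have hne : ⟪α, α⟫ ≠ (0:ℝ) := ne_of_gt hαα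
    have h2 : k * ⟪α, α⟫ = 2 * ⟪τ, α⟫ := by rw [hk]; field_simp
    rw [hinner] at h2
    nlinarith [mul_pos hkpos hαα]

lemma connTo_self (R : RootSystemData V) (S : Finset V) {x : V} (hx : x ∈ S) :
    R.connTo S x x :=
  ⟨0, fun _ => x, rfl, rfl, fun _ _ => hx, fun i h => absurd h (Nat.not_lt_zero i)⟩

lemma connTo_cons (R : RootSystemData V) (S : Finset V) {x y a : V}
    (hx : x ∈ S) (hxy : ⟪x, y⟫ ≠ 0) (h : R.connTo S y a) : R.connTo S x a := by
  obtain ⟨k, p, h0, hk, hmem, hadj⟩ := h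
  refine ⟨k + 1, fun i => match i with | 0 => x | Nat.succ j => p j, rfl, hk, ?_, ?_⟩
  · intro i hi
    match i with
    | 0 => exact hx
    | Nat.succ j => exact hmem j (Nat.succ_le_succ_iff.mp hi)
  · intro i hi
    match i with
    | 0 => simpa [h0] using hxy
    | Nat.succ j => exact hadj j (Nat.succ_lt_succ_iff.mp hi)

end RootSystemData

/-- Let `U` be the union of the connected components of `A ∪ B` not meeting `A` and
`B′ = B \\ U`.  Then `(A,B)`-roots coincide with `(A,B′)`-roots, significant `(A,B)`-roots
coincide with significant `(A,B′)`-roots, and `ℓ(A,B) = ℓ(A,B′)`. -/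
theorem ell_eq_ell_prune
    {V : Type*} [NormedAddCommGroup V] [InnerProductSpace ℝ V]
    (R : RootSystemData V)
    (A B : Finset V) (hA : A ⊆ R.simple) (hB : B ⊆ R.simple) (hAB : Disjoint A B)
    (U B' : Finset V)
    (hU : U = (A ∪ B).filter fun x => ¬ ∃ a ∈ A, R.connTo (A ∪ B) x a)
    (hB' : B' = B \ U) :
    (∀ δ : V, R.IsABRoot A B δ ↔ R.IsABRoot A B' δ) ∧
    (∀ δ : V, R.IsSignificant A B δ ↔ R.IsSignificant A B' δ) ∧
    R.ell A B = R.ell A B' := by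
  have hABs : (A ∪ B : Finset V) ⊆ R.simple := Finset.union_subset hA hB
  have hUAB : U ⊆ A ∪ B := by rw [hU]; exact Finset.filter_subset _ _
  have hAnotU : ∀ a ∈ A, a ∉ U := by
    intro a ha hc
    rw [hU] at hc
    exact (Finset.mem_filter.mp hc).2
      ⟨a, ha, R.connTo_self _ (Finset.mem_union_left _ ha)⟩
  have horth : ∀ x ∈ U, ∀ y ∈ (A ∪ B) \ U, ⟪x, y⟫ = 0 := by
    intro x hx y hy
    by_contra hxy
    rw [Finset.mem_sdiff] at hy
    have hxAB : x ∈ A ∪ B := hUAB hx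
    have hyc : ∃ a ∈ A, R.connTo (A ∪ B) y a := by
      by_contra hc
      exact hy.2 (by rw [hU]; exact Finset.mem_filter.mpr ⟨hy.1, hc⟩)
    obtain ⟨a, ha, hconn⟩ := hyc
    rw [hU] at hx
    exact (Finset.mem_filter.mp hx).2 ⟨a, ha, R.connTo_cons _ hxAB hxy hconn⟩
  have hkey : ∀ δ : V, R.IsABRoot A B δ → R.support δ ⊆ A ∪ B' := by
    rintro δ ⟨hpos, hsub, α₀, hα₀A, hα₀pos⟩
    have hα₀sup : α₀ ∈ R.support δ := R.mem_support.mpr ⟨hA hα₀A, ne_of_gt hα₀pos⟩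
    have hα₀S2 : α₀ ∈ (A ∪ B) \ U :=
      Finset.mem_sdiff.mpr ⟨Finset.mem_union_left _ hα₀A, hAnotU α₀ hα₀A⟩
    have hnosplit := R.no_split U ((A ∪ B) \ U) (fun x hx => hABs (hUAB hx))
      (fun x hx => hABs (Finset.mem_sdiff.mp hx).1) horth
    intro x hxsup
    have hxAB : x ∈ A ∪ B := hsub hxsup
    have hxU : x ∉ U := by
      intro hxU
      refine hnosplit ⟨δ, hpos, ?_, ⟨x, Finset.mem_inter.mpr ⟨hxsup, hxU⟩⟩,
        ⟨α₀, Finset.mem_inter.mpr ⟨hα₀sup, hα₀S2⟩⟩⟩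
      intro y hy
      by_cases hyU : y ∈ U
      · exact Finset.mem_union_left _ hyU
      · exact Finset.mem_union_right _ (Finset.mem_sdiff.mpr ⟨hsub hy, hyU⟩)
    rcases Finset.mem_union.mp hxAB with h | h
    · exact Finset.mem_union_left _ h
    · exact Finset.mem_union_right _ (by rw [hB']; exact Finset.mem_sdiff.mpr ⟨h, hxU⟩)
  have hABiff : ∀ δ : V, R.IsABRoot A B δ ↔ R.IsABRoot A B' δ := by
    intro δ
    constructor
    · rintro ⟨hpos, hsub, hex⟩
      exact ⟨hpos, hkey δ ⟨hpos, hsub, hex⟩, hex⟩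
    · rintro ⟨hpos, hsub, hex⟩
      refine ⟨hpos, hsub.trans (Finset.union_subset_union_right ?_), hex⟩
      rw [hB']; exact Finset.sdiff_subset
  have hsum : ∀ σ : V, R.IsABRoot A B σ →
      ∑ β ∈ B, R.coeff σ β * ⟪β, β⟫ = ∑ β ∈ B', R.coeff σ β * ⟪β, β⟫ := by
    intro σ hσ
    have hsup := hkey σ hσ
    symm
    apply Finset.sum_subset (by rw [hB']; exact Finset.sdiff_subset)
    intro β hβB hβB'
    have hβns : β ∉ R.support σ := by
      intro hc
      rcases Finset.mem_union.mp (hsup hc) with h | h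
      · exact (Finset.disjoint_left.mp hAB h) hβB
      · exact hβB' h
    rw [R.coeff_eq_zero_of_not_mem_support (hB hβB) hβns, zero_mul]
  have hSigiff : ∀ δ : V, R.IsSignificant A B δ ↔ R.IsSignificant A B' δ := by
    intro δ
    constructor
    · rintro ⟨hδ, σ, hσ, hle, hsums, hlen, hbound⟩
      exact ⟨(hABiff δ).mp hδ, σ, (hABiff σ).mp hσ, hle,
        by rw [← hsum σ hσ]; exact hsums, hlen, hbound⟩
    · rintro ⟨hδ, σ, hσ, hle, hsums, hlen, hbound⟩
      refine ⟨(hABiff δ).mpr hδ, σ, (hABiff σ).mpr hσ, hle, ?_, hlen, hbound⟩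
      rw [hsum σ ((hABiff σ).mpr hσ)]; exact hsums
  refine ⟨hABiff, hSigiff, ?_⟩
  unfold RootSystemData.ell
  exact congrArg Finset.card (Finset.filter_congr (fun δ _ => hSigiff δ))
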